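/- Let X and S be types, f : X → S, T a transition relation on X, and T_S a transition relation on S that is forward-simulated by T along f (for all s, s' with T_S s s' and every x with f x = s, there exists x' with f x' = s' and T x x'). Let ρ = [P₁, …, P_k] be a query of predicates on S. If there exists a finite T_S-path s₀, …, s_n such that ρ conforms with it, then for every x₀ with f x₀ = s₀ there exists a finite T-path x₀, …, x_n such that the query [P₁ ∘ f, …, P_k ∘ f] conforms with it. -/

import Mathlib

/-- A query `ρ` (a list of predicates on `S`) conforms with a finite sequence
`s 0, …, s n` if there are strictly increasing indices `i₁ < … < i_k ≤ n` such that
the `j`-th predicate holds at `s (i_j)`. -/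
def Conforms {S : Type*} (ρ : List (S → Prop)) (s : ℕ → S) (n : ℕ) : Prop :=
  ∃ idx : Fin ρ.length → ℕ, StrictMono idx ∧ (∀ j, idx j ≤ n) ∧
    ∀ j, ρ.get j (s (idx j))

/-- If an abstract path conforming with the query exists, then from any
concrete state abstracting to its initial state there is a concrete path conforming
with the pulled-back query (Proposition 1, Case 1). -/
theorem feasible_of_abstract_conforming_path {X S : Type*} (f : X → S)
    (T : X → X → Prop) (TS : S → S → Prop)
    (hsim : ∀ s s', TS s s' → ∀ x, f x = s → ∃ x', f x' = s' ∧ T x x')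
    (ρ : List (S → Prop)) (n : ℕ) (s : ℕ → S)
    (hpath : ∀ i < n, TS (s i) (s (i + 1)))
    (hconf : Conforms ρ s n) :
    ∀ x₀ : X, f x₀ = s 0 →
      ∃ x : ℕ → X, x 0 = x₀ ∧ (∀ i < n, T (x i) (x (i + 1))) ∧
        Conforms (ρ.map (fun P => P ∘ f)) x n := by
  classical
  intro x₀ h₀
  -- build the lifted path by recursion
  have key : ∀ i, ∃ x : ℕ → X, x 0 = x₀ ∧ (∀ j ≤ i, j ≤ n → f (x j) = s j) ∧
      (∀ j, j < i → j < n → T (x j) (x (j + 1))) := by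
    intro i
    induction i with
    | zero =>
      refine ⟨fun _ => x₀, rfl, ?_, ?_⟩
      · intro j hj _; interval_cases j; exact h₀
      · intro j hj; omega
    | succ i ih =>
      obtain ⟨x, hx0, hf, hT⟩ := ih
      by_cases hin : i < n
      · obtain ⟨x', hx'f, hx'T⟩ := hsim (s i) (s (i+1)) (hpath i hin) (x i)
          (hf i le_rfl hin.le)
        refine ⟨fun j => if j = i + 1 then x' else x j, by simp [hx0], ?_, ?_⟩
        · intro j hj hjn
          by_cases h : j = i + 1
          · simp [h, hx'f]
          · have : j ≤ i := by omega
            simp [h, hf j this hjn]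
        · intro j hj hjn
          by_cases h : j = i
          · subst h; simpa [Nat.succ_ne_self, hx'T] using hx'T
          · have hj' : j < i := by omega
            have : j ≠ i + 1 := by omega
            have : j + 1 ≠ i + 1 := by omega
            simpa [this, h, show j ≠ i + 1 by omega] using hT j hj' hjn
      · exact ⟨x, hx0, fun j hj hjn => hf j (by omega) hjn,
          fun j hj hjn => hT j (by omega) hjn⟩
  obtain ⟨x, hx0, hf, hT⟩ := key n
  obtain ⟨idx, hmono, hle, hP⟩ := hconf
  refine ⟨x, hx0, fun i hi => hT i hi hi, ?_⟩
  refine ⟨fun j => idx (Fin.cast (by simp) j), fun a b hab => hmono (by simpa using hab),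
    fun j => hle _, fun j => ?_⟩
  have := hP (Fin.cast (by simp) j)
  simpa [List.getElem_map, Function.comp, hf _ (hle _) (hle _)] using this
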